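/- arXiv:1512.03408 — 2 statements merged into one kernel-verified Lean document; each statement's English description precedes it below -/
import Mathlib

section
/- Let N be a complete nest and V a weakly closed T(N)-bimodule in B(H). A rank-one operator x ⊗ y lies in V if and only if P_y B(H) P̂_x^⊥ ⊆ V. -/
/-- The order on orthogonal projections: `P ≤ Q` encoded as `P*Q = P ∧ Q*P = P`. -/
def opLe {H : Type} [NormedAddCommGroup H] [InnerProductSpace ℂ H]
    (P Q : H →L[ℂ] H) : Prop := P * Q = P ∧ Q * P = P

/-- Strict order on projections. -/
def opLt {H : Type} [NormedAddCommGroup H] [InnerProductSpace ℂ H]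
    (P Q : H →L[ℂ] H) : Prop := opLe P Q ∧ P ≠ Q

/-- A complete nest: a totally ordered complete sublattice of the lattice of orthogonal
projections on `H`, containing `0` and `1`.  Completeness means that every subset has a
least upper bound and a greatest lower bound (computed in the full projection lattice)
belonging to the nest. -/
structure IsNest {H : Type} [NormedAddCommGroup H] [InnerProductSpace ℂ H] [CompleteSpace H]
    (N : Set (H →L[ℂ] H)) : Prop where
  proj : ∀ P ∈ N, IsSelfAdjoint P ∧ IsIdempotentElem P
  zero_mem : (0 : H →L[ℂ] H) ∈ N
  one_mem : (1 : H →L[ℂ] H) ∈ N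
  total : ∀ P ∈ N, ∀ Q ∈ N, opLe P Q ∨ opLe Q P
  complete_sup : ∀ S ⊆ N, ∃ B ∈ N, (∀ P ∈ S, opLe P B) ∧
    ∀ C : H →L[ℂ] H, IsSelfAdjoint C → IsIdempotentElem C → (∀ P ∈ S, opLe P C) → opLe B C
  complete_inf : ∀ S ⊆ N, ∃ B ∈ N, (∀ P ∈ S, opLe B P) ∧
    ∀ C : H →L[ℂ] H, IsSelfAdjoint C → IsIdempotentElem C → (∀ P ∈ S, opLe C P) → opLe C B

/-- `B` is the supremum, taken in the nest `N`, of the subset `S` of `N`. -/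
def IsNestSup {H : Type} [NormedAddCommGroup H] [InnerProductSpace ℂ H]
    (N S : Set (H →L[ℂ] H)) (B : H →L[ℂ] H) : Prop :=
  B ∈ N ∧ (∀ P ∈ S, opLe P B) ∧ ∀ C ∈ N, (∀ P ∈ S, opLe P C) → opLe B C

/-- `B` is the infimum, taken in the nest `N`, of the subset `S` of `N`. -/
def IsNestInf {H : Type} [NormedAddCommGroup H] [InnerProductSpace ℂ H]
    (N S : Set (H →L[ℂ] H)) (B : H →L[ℂ] H) : Prop :=
  B ∈ N ∧ (∀ P ∈ S, opLe B P) ∧ ∀ C ∈ N, (∀ P ∈ S, opLe C P) → opLe C B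

/-- The nest algebra `T(N)` of a nest `N`: all `T` with `P^⊥ T P = 0` for all `P ∈ N`. -/
def nestAlg {H : Type} [NormedAddCommGroup H] [InnerProductSpace ℂ H]
    (N : Set (H →L[ℂ] H)) : Set (H →L[ℂ] H) :=
  {T | ∀ P ∈ N, (1 - P) * T * P = 0}

/-- A subset of `B(H)` is weakly closed if it is closed in the weak operator topology. -/
def WClosed {H : Type} [NormedAddCommGroup H] [InnerProductSpace ℂ H] [CompleteSpace H]
    (M : Set (H →L[ℂ] H)) : Prop :=
  IsClosed ((ContinuousLinearMapWOT.ofCLM : (H →L[ℂ] H) → (H →WOT[ℂ] H)) '' M)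

/-- The closure of a subset of `B(H)` in the weak operator topology. -/
def wClosure {H : Type} [NormedAddCommGroup H] [InnerProductSpace ℂ H] [CompleteSpace H]
    (S : Set (H →L[ℂ] H)) : Set (H →L[ℂ] H) :=
  (ContinuousLinearMapWOT.ofCLM : (H →L[ℂ] H) → (H →WOT[ℂ] H)) ⁻¹' (closure ((ContinuousLinearMapWOT.ofCLM : (H →L[ℂ] H) → (H →WOT[ℂ] H)) '' S))

/-- The rank-one operator `x ⊗ y : z ↦ ⟨z,x⟩y` (inner product linear in its first variable,
i.e. `⟨z,x⟩ = ⟪x,z⟫` in Mathlib's convention). -/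
noncomputable def rankOne {H : Type} [NormedAddCommGroup H] [InnerProductSpace ℂ H]
    (x y : H) : H →L[ℂ] H :=
  (innerSL ℂ x).smulRight y

section Helpers

open scoped InnerProductSpace
open Filter Topology

variable {H : Type} [NormedAddCommGroup H] [InnerProductSpace ℂ H]

lemma rankOne_apply (a b z : H) : rankOne a b z = ⟪a, z⟫_ℂ • b := rfl

lemma sa_inner {P : H →L[ℂ] H} [CompleteSpace H] (h : IsSelfAdjoint P) (a b : H) :
    ⟪P a, b⟫_ℂ = ⟪a, P b⟫_ℂ := by
  conv_lhs => rw [← h.adjoint_eq]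
  rw [ContinuousLinearMap.adjoint_inner_left]

lemma idem_apply {P : H →L[ℂ] H} (h : IsIdempotentElem P) (z : H) : P (P z) = P z := by
  conv_rhs => rw [← h]
  rfl

lemma proj_norm_le [CompleteSpace H] {P : H →L[ℂ] H} (hsa : IsSelfAdjoint P)
    (hid : IsIdempotentElem P) (z : H) : ‖P z‖ ≤ ‖z‖ := by
  rcases eq_or_ne (P z) 0 with h0 | h0
  · rw [h0]; simp [norm_nonneg]
  have h1 : (‖P z‖ : ℝ)^2 = RCLike.re ⟪z, P z⟫_ℂ := by
    rw [← inner_self_eq_norm_sq (𝕜 := ℂ), sa_inner hsa z (P z), idem_apply hid]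
  have h2 : RCLike.re ⟪z, P z⟫_ℂ ≤ ‖z‖ * ‖P z‖ := re_inner_le_norm _ _
  have h3 : 0 < ‖P z‖ := norm_pos_iff.mpr h0
  nlinarith

lemma opLe_antisymm {P Q : H →L[ℂ] H} (h1 : opLe P Q) (h2 : opLe Q P) : P = Q :=
  h1.2.symm.trans h2.1

lemma comp_rankOne (T : H →L[ℂ] H) (a b : H) : T * rankOne a b = rankOne a (T b) := by
  ext z
  simp [ContinuousLinearMap.mul_apply, rankOne_apply]

lemma adjoint_rankOne [CompleteSpace H] (a b : H) :
    ContinuousLinearMap.adjoint (rankOne a b) = rankOne b a := by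
  symm
  rw [ContinuousLinearMap.eq_adjoint_iff]
  intro z w
  simp only [rankOne_apply, inner_smul_left, inner_smul_right, inner_conj_symm]
  ring

lemma rankOne_comp [CompleteSpace H] (S : H →L[ℂ] H) (a b : H) :
    rankOne a b * S = rankOne (ContinuousLinearMap.adjoint S a) b := by
  ext z
  simp only [ContinuousLinearMap.mul_apply, rankOne_apply,
    ContinuousLinearMap.adjoint_inner_left]

lemma rankOne_mem_nestAlg [CompleteSpace H] {N : Set (H →L[ℂ] H)} (hN : IsNest N) {a b : H}
    (h : ∀ P ∈ N, P a = 0 ∨ P b = b) : rankOne a b ∈ nestAlg N := by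
  intro P hP
  have hsa := (hN.proj P hP).1
  ext z
  simp only [ContinuousLinearMap.mul_apply, rankOne_apply, ContinuousLinearMap.sub_apply,
    ContinuousLinearMap.one_apply, ContinuousLinearMap.zero_apply, map_smul]
  rcases h P hP with h1 | h1
  · have : ⟪a, P z⟫_ℂ = 0 := by rw [← sa_inner hsa, h1, inner_zero_left]
    rw [this]; simp
  · rw [h1]; simp

lemma zero_mem_nestAlg {N : Set (H →L[ℂ] H)} : (0 : H →L[ℂ] H) ∈ nestAlg N := by
  intro P hP; simp

lemma mem_of_wot_tendsto [CompleteSpace H] {V : Submodule ℂ (H →L[ℂ] H)}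
    (hVc : WClosed (V : Set (H →L[ℂ] H)))
    {ι : Type} {l : Filter ι} [l.NeBot] {f : ι → H →L[ℂ] H}
    (hf : ∀ i, f i ∈ V) {T : H →L[ℂ] H}
    (h : ∀ u v : H, Tendsto (fun i => ⟪u, f i v⟫_ℂ) l (𝓝 ⟪u, T v⟫_ℂ)) : T ∈ V := by
  have ht : Tendsto (fun i => (ContinuousLinearMapWOT.ofCLM : (H →L[ℂ] H) → (H →WOT[ℂ] H)) (f i)) l
      (𝓝 ((ContinuousLinearMapWOT.ofCLM : (H →L[ℂ] H) → (H →WOT[ℂ] H)) T)) := by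
    rw [ContinuousLinearMapWOT.tendsto_iff_forall_dual_apply_tendsto]
    intro v y
    obtain ⟨u, hu⟩ : ∃ u, (innerSL ℂ u : H →L[ℂ] ℂ) = y :=
      ⟨(InnerProductSpace.toDual ℂ H).symm y, by
        ext z; exact InnerProductSpace.toDual_symm_apply⟩
    rw [← hu]
    exact h u v
  have hmem : (ContinuousLinearMapWOT.ofCLM : (H →L[ℂ] H) → (H →WOT[ℂ] H)) T ∈
      ((ContinuousLinearMapWOT.ofCLM : (H →L[ℂ] H) → (H →WOT[ℂ] H)) '' (V : Set (H →L[ℂ] H))) :=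
    hVc.mem_of_tendsto ht (Eventually.of_forall fun i => ⟨f i, hf i, rfl⟩)
  obtain ⟨S, hS, hST⟩ := hmem
  rwa [← ContinuousLinearMapWOT.ofCLM_injective hST]

lemma inner_proj_self [CompleteSpace H] {Q : H →L[ℂ] H} (hsa : IsSelfAdjoint Q)
    (hid : IsIdempotentElem Q) (x : H) : ⟪Q x, x⟫_ℂ = (‖Q x‖ : ℂ)^2 := by
  have h1 : ⟪Q x, x - Q x⟫_ℂ = 0 := by
    rw [sa_inner hsa]
    have : Q (x - Q x) = 0 := by
      rw [map_sub, idem_apply hid, sub_self]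
    rw [this, inner_zero_right]
  have h2 : ⟪Q x, x⟫_ℂ = ⟪Q x, Q x⟫_ℂ + ⟪Q x, x - Q x⟫_ℂ := by
    rw [← inner_add_right]
    congr 1
    abel
  rw [h2, h1, add_zero, inner_self_eq_norm_sq_to_K]
  norm_cast

lemma exists_T_exact [CompleteSpace H] {N : Set (H →L[ℂ] H)} (hN : IsNest N) {y w : H}
    {P : H →L[ℂ] H} (hP : P ∈ N) (hPy : P y ≠ y)
    (hw : ∀ Q ∈ N, opLe P Q → ¬ opLe Q P → Q w = w) :
    ∃ T ∈ nestAlg N, T y = w := by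
  have hPsa := (hN.proj P hP).1
  have hPid := (hN.proj P hP).2
  set g : H := y - P y with hg
  have hg0 : g ≠ 0 := sub_ne_zero.mpr (Ne.symm hPy)
  have hgnorm : ((‖g‖ : ℂ))^2 ≠ 0 := by
    apply pow_ne_zero
    simpa using norm_ne_zero_iff.mpr hg0
  have hgy : ⟪g, y⟫_ℂ = (‖g‖ : ℂ)^2 := by
    have hPg : P g = 0 := by
      simp [hg, map_sub, idem_apply hPid]
    have h1 : ⟪g, P y⟫_ℂ = 0 := by
      rw [← sa_inner hPsa, hPg, inner_zero_left]
    have h2 : ⟪g, y⟫_ℂ = ⟪g, g⟫_ℂ + ⟪g, P y⟫_ℂ := by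
      rw [← inner_add_right]
      congr 1
      rw [hg]
      abel
    rw [h2, h1, add_zero, inner_self_eq_norm_sq_to_K]
    norm_cast
  have key : ∀ Q ∈ N, opLe Q P → Q g = 0 := by
    intro Q hQ hQP
    have hQPy : Q (P y) = Q y := by
      have := congrArg (fun T : H →L[ℂ] H => T y) hQP.1
      simpa [ContinuousLinearMap.mul_apply] using this
    simp [hg, map_sub, hQPy]
  refine ⟨rankOne g (((‖g‖ : ℂ)^2)⁻¹ • w), ?_, ?_⟩
  · apply rankOne_mem_nestAlg hN
    intro Q hQ
    by_cases hQP : opLe Q P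
    · exact Or.inl (key Q hQ hQP)
    · rcases hN.total Q hQ P hP with h | h
      · exact Or.inl (key Q hQ h)
      · right
        rw [map_smul, hw Q hQ h hQP]
  · rw [rankOne_apply, hgy, smul_smul, mul_inv_cancel₀ hgnorm, one_smul]

lemma approx_y [CompleteSpace H] {N : Set (H →L[ℂ] H)} (hN : IsNest N)
    {y : H} {Py : H →L[ℂ] H} (hPy : IsNestInf N {Q | Q ∈ N ∧ Q y = y} Py) (hPyy : Py y = y)
    {v : H} (hv : Py v = v) {ε : ℝ} (hε : 0 < ε) :
    ∃ T ∈ nestAlg N, ‖T y - v‖ < ε := by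
  rcases eq_or_ne v 0 with rfl | hv0
  · exact ⟨0, zero_mem_nestAlg, by simpa using hε⟩
  obtain ⟨hPyN, hPylb, -⟩ := hPy
  set D : Set (H →L[ℂ] H) := {P | P ∈ N ∧ ¬ opLe Py P} with hD
  obtain ⟨B, hBN, hBub, hBleast⟩ := hN.complete_sup D (fun P hP => hP.1)
  have hPyub : ∀ P ∈ D, opLe P Py := by
    intro P hPD
    rcases hN.total P hPD.1 Py hPyN with h | h
    · exact h
    · exact absurd h hPD.2
  have hBlePy : opLe B Py := hBleast Py (hN.proj Py hPyN).1 (hN.proj Py hPyN).2 hPyub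
  by_cases hcase : opLe Py B
  · -- B = Py : approximation case
    have hBeq : B = Py := opLe_antisymm hBlePy hcase
    by_contra hcon
    push_neg at hcon
    have hPv : ∀ P ∈ D, ε ≤ ‖P v - v‖ := by
      intro P hPD
      have hPyy' : P y ≠ y := fun h => hPD.2 (hPylb P ⟨hPD.1, h⟩)
      have hwcond : ∀ Q ∈ N, opLe P Q → ¬ opLe Q P → Q (P v) = P v := by
        intro Q hQ hPQ _
        have := congrArg (fun T : H →L[ℂ] H => T v) hPQ.2
        simpa [ContinuousLinearMap.mul_apply] using this
      obtain ⟨T, hT, hTy⟩ := exists_T_exact hN hPD.1 hPyy' hwcond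
      have := hcon T hT
      rwa [hTy] at this
    have hD0 : (0 : H →L[ℂ] H) ∈ D := by
      refine ⟨hN.zero_mem, fun h => ?_⟩
      have hPy0 : Py = 0 := h.1.symm.trans (mul_zero Py)
      apply hv0
      rw [← hv, hPy0]
      simp
    set U : Submodule ℂ H :=
      { carrier := {w | ∃ P ∈ D, P w = w}
        add_mem' := by
          rintro w₁ w₂ ⟨P₁, hP₁, hw₁⟩ ⟨P₂, hP₂, hw₂⟩
          rcases hN.total P₁ hP₁.1 P₂ hP₂.1 with h | h
          · refine ⟨P₂, hP₂, ?_⟩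
            have hPw : P₂ w₁ = w₁ := by
              conv_lhs => rw [← hw₁]
              have := congrArg (fun T : H →L[ℂ] H => T w₁) h.2
              simpa [ContinuousLinearMap.mul_apply, hw₁] using this
            rw [map_add, hPw, hw₂]
          · refine ⟨P₁, hP₁, ?_⟩
            have hPw : P₁ w₂ = w₂ := by
              conv_lhs => rw [← hw₂]
              have := congrArg (fun T : H →L[ℂ] H => T w₂) h.2
              simpa [ContinuousLinearMap.mul_apply, hw₂] using this
            rw [map_add, hPw, hw₁]
        zero_mem' := ⟨0, hD0, map_zero 0⟩
        smul_mem' := by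
          rintro c w ⟨P, hP, hw⟩
          exact ⟨P, hP, by rw [map_smul, hw]⟩ } with hU
    set K : Submodule ℂ H := U.topologicalClosure with hK
    haveI : CompleteSpace K := (U.isClosed_topologicalClosure).completeSpace_coe
    set E : H →L[ℂ] H := K.subtypeL.comp K.orthogonalProjectionOnto with hE
    have hEapp : ∀ z, E z = (K.orthogonalProjectionOnto z : H) := fun z => rfl
    have hEmem : ∀ z, E z ∈ K := fun z => by rw [hEapp]; exact SetLike.coe_mem _
    have hEK : ∀ z ∈ K, E z = z := by
      intro z hz
      rw [hEapp]
      exact congrArg _ (Submodule.orthogonalProjectionOnto_mem_subspace_eq_self (⟨z, hz⟩ : K))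
    have hEsa : IsSelfAdjoint E := isSelfAdjoint_starProjection K
    have hEid : IsIdempotentElem E := by
      ext z
      exact hEK (E z) (hEmem z)
    have hEub : ∀ P ∈ D, opLe P E := by
      intro P hPD
      have h1 : E * P = P := by
        ext z
        have hPz : P z ∈ U := ⟨P, hPD, idem_apply (hN.proj P hPD.1).2 z⟩
        exact hEK (P z) (U.le_topologicalClosure hPz)
      have h2 : P * E = P := by
        have := congrArg star h1
        rwa [star_mul, hEsa.star_eq, (hN.proj P hPD.1).1.star_eq] at this
      exact ⟨h2, h1⟩
    have hBE : opLe B E := hBleast E hEsa hEid hEub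
    have hEPy : E * Py = Py := by rw [← hBeq]; exact hBE.2
    have hEv : E v = v := by
      conv_lhs => rw [← hv]
      have := congrArg (fun T : H →L[ℂ] H => T v) hEPy
      simpa [ContinuousLinearMap.mul_apply, hv] using this
    have hvK : v ∈ K := by rw [← hEv]; exact hEmem v
    have hdist : ∀ w ∈ (U : Set H), ε ≤ ‖w - v‖ := by
      rintro w ⟨P, hPD, hPw⟩
      have hPsa := (hN.proj P hPD.1).1
      have hPid := (hN.proj P hPD.1).2
      have h2 : P v - v = -(((1 : H →L[ℂ] H) - P) (v - w)) := by
        simp only [ContinuousLinearMap.sub_apply, ContinuousLinearMap.one_apply, map_sub, hPw]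
        abel
      calc ε ≤ ‖P v - v‖ := hPv P hPD
        _ = ‖((1 : H →L[ℂ] H) - P) (v - w)‖ := by rw [h2, norm_neg]
        _ ≤ ‖v - w‖ := proj_norm_le ((IsSelfAdjoint.one (R := H →L[ℂ] H)).sub hPsa)
            hPid.one_sub (v - w)
        _ = ‖w - v‖ := norm_sub_rev _ _
    have hcl : IsClosed {w : H | ε ≤ ‖w - v‖} :=
      isClosed_le continuous_const ((continuous_id.sub continuous_const).norm)
    have hdistK : ∀ w ∈ (K : Set H), ε ≤ ‖w - v‖ := by
      intro w hwK
      have hsub : (K : Set H) ⊆ {w : H | ε ≤ ‖w - v‖} := by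
        rw [hK, Submodule.topologicalClosure_coe]
        exact closure_minimal hdist hcl
      exact hsub hwK
    have := hdistK v hvK
    simp only [sub_self, norm_zero] at this
    linarith
  · -- exact case
    have hBy : B y ≠ y := fun h => hcase (hPylb B ⟨hBN, h⟩)
    have hwcond : ∀ Q ∈ N, opLe B Q → ¬ opLe Q B → Q v = v := by
      intro Q hQ hBQ hQB
      have hQD : Q ∉ D := fun hD' => hQB (hBub Q hD')
      have hPyQ : opLe Py Q := by
        by_contra hh
        exact hQD ⟨hQ, hh⟩
      conv_lhs => rw [← hv]
      have := congrArg (fun T : H →L[ℂ] H => T v) hPyQ.2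
      simpa [ContinuousLinearMap.mul_apply, hv] using this
    obtain ⟨T, hT, hTy⟩ := exists_T_exact hN hBN hBy hwcond
    exact ⟨T, hT, by rw [hTy]; simpa using hε⟩

lemma approx_x [CompleteSpace H] {N : Set (H →L[ℂ] H)} (hN : IsNest N)
    {x : H} {Phx : H →L[ℂ] H} (hPhx : IsNestSup N {Q | Q ∈ N ∧ Q x = 0} Phx) (hPhxx : Phx x = 0)
    {u : H} (hu : Phx u = 0) {ε : ℝ} (hε : 0 < ε) :
    ∃ S ∈ nestAlg N, ‖ContinuousLinearMap.adjoint S x - u‖ < ε := by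
  rcases eq_or_ne u 0 with rfl | hu0
  · exact ⟨0, zero_mem_nestAlg, by simpa using hε⟩
  obtain ⟨hPhxN, hPhxub, -⟩ := hPhx
  set D : Set (H →L[ℂ] H) := {Q | Q ∈ N ∧ ¬ opLe Q Phx} with hD
  obtain ⟨B, hBN, hBlb, hBgreatest⟩ := hN.complete_inf D (fun P hP => hP.1)
  have hPhxlb : ∀ Q ∈ D, opLe Phx Q := by
    intro Q hQD
    rcases hN.total Q hQD.1 Phx hPhxN with h | h
    · exact absurd h hQD.2
    · exact h
  have hPhxleB : opLe Phx B := hBgreatest Phx (hN.proj Phx hPhxN).1 (hN.proj Phx hPhxN).2 hPhxlb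
  have hDx : ∀ Q ∈ D, Q x ≠ 0 := by
    intro Q hQD h
    exact hQD.2 (hPhxub Q ⟨hQD.1, h⟩)
  have hPu : ∀ P ∈ N, opLe P Phx → P u = 0 := by
    intro P hP hPPhx
    have := congrArg (fun T : H →L[ℂ] H => T u) hPPhx.1
    simpa [ContinuousLinearMap.mul_apply, hu] using this.symm
  by_cases hcase : opLe B Phx
  · -- B = Phx : approximation case
    have hBeq : B = Phx := opLe_antisymm hcase hPhxleB
    by_contra hcon
    push_neg at hcon
    have hQu : ∀ Q ∈ D, ε ≤ ‖Q u‖ := by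
      intro Q hQD
      have hQsa := (hN.proj Q hQD.1).1
      have hQid := (hN.proj Q hQD.1).2
      have hQx0 : ((‖Q x‖ : ℂ))^2 ≠ 0 := by
        apply pow_ne_zero
        simpa using norm_ne_zero_iff.mpr (hDx Q hQD)
      set S : H →L[ℂ] H := rankOne (((‖Q x‖ : ℂ)^2)⁻¹ • (u - Q u)) (Q x) with hS
      have hSmem : S ∈ nestAlg N := by
        apply rankOne_mem_nestAlg hN
        intro P hP
        rcases hN.total P hP Q hQD.1 with h | h
        · left
          have hPQu : P (Q u) = P u := by
            have := congrArg (fun T : H →L[ℂ] H => T u) h.1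
            simpa [ContinuousLinearMap.mul_apply] using this
          rw [map_smul, map_sub, hPQu, sub_self, smul_zero]
        · right
          have := congrArg (fun T : H →L[ℂ] H => T x) h.2
          simpa [ContinuousLinearMap.mul_apply] using this
      have hSx : ContinuousLinearMap.adjoint S x = u - Q u := by
        rw [hS, adjoint_rankOne, rankOne_apply, inner_proj_self hQsa hQid,
          smul_smul, mul_inv_cancel₀ hQx0, one_smul]
      have := hcon S hSmem
      rw [hSx] at this
      simpa using this
    have hD1 : (1 : H →L[ℂ] H) ∈ D := by
      refine ⟨hN.one_mem, fun h => ?_⟩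
      have hPhx1 : Phx = 1 := (one_mul Phx).symm.trans h.2
      apply hu0
      have : Phx u = u := by rw [hPhx1]; rfl
      rw [← this, hu]
    set U : Submodule ℂ H :=
      { carrier := {w | ∃ Q ∈ D, Q w = 0}
        add_mem' := by
          rintro w₁ w₂ ⟨Q₁, hQ₁, hw₁⟩ ⟨Q₂, hQ₂, hw₂⟩
          rcases hN.total Q₁ hQ₁.1 Q₂ hQ₂.1 with h | h
          · refine ⟨Q₁, hQ₁, ?_⟩
            have hQw : Q₁ w₂ = 0 := by
              have := congrArg (fun T : H →L[ℂ] H => T w₂) h.1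
              simpa [ContinuousLinearMap.mul_apply, hw₂] using this.symm
            rw [map_add, hw₁, hQw, add_zero]
          · refine ⟨Q₂, hQ₂, ?_⟩
            have hQw : Q₂ w₁ = 0 := by
              have := congrArg (fun T : H →L[ℂ] H => T w₁) h.1
              simpa [ContinuousLinearMap.mul_apply, hw₁] using this.symm
            rw [map_add, hw₂, hQw, zero_add]
        zero_mem' := ⟨1, hD1, map_zero 1⟩
        smul_mem' := by
          rintro c w ⟨Q, hQ, hw⟩
          exact ⟨Q, hQ, by rw [map_smul, hw, smul_zero]⟩ } with hU
    set K : Submodule ℂ H := U.topologicalClosure with hK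
    haveI : CompleteSpace K := (U.isClosed_topologicalClosure).completeSpace_coe
    set E : H →L[ℂ] H := K.subtypeL.comp K.orthogonalProjectionOnto with hE
    have hEapp : ∀ z, E z = (K.orthogonalProjectionOnto z : H) := fun z => rfl
    have hEmem : ∀ z, E z ∈ K := fun z => by rw [hEapp]; exact SetLike.coe_mem _
    have hEK : ∀ z ∈ K, E z = z := by
      intro z hz
      rw [hEapp]
      exact congrArg _ (Submodule.orthogonalProjectionOnto_mem_subspace_eq_self (⟨z, hz⟩ : K))
    have hEsa : IsSelfAdjoint E := isSelfAdjoint_starProjection K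
    have hEid : IsIdempotentElem E := by
      ext z
      exact hEK (E z) (hEmem z)
    set F : H →L[ℂ] H := 1 - E with hF
    have hFsa : IsSelfAdjoint F := (IsSelfAdjoint.one (R := H →L[ℂ] H)).sub hEsa
    have hFid : IsIdempotentElem F := hEid.one_sub
    have hFlb : ∀ Q ∈ D, opLe F Q := by
      intro Q hQD
      have hQsa := (hN.proj Q hQD.1).1
      have hQid := (hN.proj Q hQD.1).2
      have hEQ : E * (1 - Q) = 1 - Q := by
        ext z
        have hz : ((1 : H →L[ℂ] H) - Q) z ∈ U := by
          refine ⟨Q, hQD, ?_⟩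
          simp only [ContinuousLinearMap.sub_apply, ContinuousLinearMap.one_apply, map_sub,
            idem_apply hQid]
          abel
        exact hEK _ (U.le_topologicalClosure hz)
      have h1 : F * Q = F := by
        rw [mul_sub, mul_one] at hEQ
        rw [hF, sub_mul, one_mul]
        have : E * Q = E - (1 - Q) := by
          rw [← hEQ]
          abel
        rw [this]
        abel
      have h2 : Q * F = F := by
        have := congrArg star h1
        rwa [star_mul, hFsa.star_eq, hQsa.star_eq] at this
      exact ⟨h1, h2⟩
    have hFB : opLe F B := hBgreatest F hFsa hFid hFlb
    have hFu : F u = 0 := by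
      have hFPhx : F * Phx = F := by rw [← hBeq]; exact hFB.1
      have := congrArg (fun T : H →L[ℂ] H => T u) hFPhx
      simpa [ContinuousLinearMap.mul_apply, hu] using this.symm
    have hEu : E u = u := by
      have h' : u - E u = 0 := by
        rw [← hFu]
        simp [hF, ContinuousLinearMap.sub_apply]
      exact (sub_eq_zero.mp h').symm
    have huK : u ∈ K := by rw [← hEu]; exact hEmem u
    have hdist : ∀ w ∈ (U : Set H), ε ≤ ‖w - u‖ := by
      rintro w ⟨Q, hQD, hQw⟩
      have hQsa := (hN.proj Q hQD.1).1
      have hQid := (hN.proj Q hQD.1).2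
      have h2 : Q u = -(Q (w - u)) := by
        rw [map_sub, hQw]
        abel
      calc ε ≤ ‖Q u‖ := hQu Q hQD
        _ = ‖Q (w - u)‖ := by rw [h2, norm_neg]
        _ ≤ ‖w - u‖ := proj_norm_le hQsa hQid (w - u)
    have hcl : IsClosed {w : H | ε ≤ ‖w - u‖} :=
      isClosed_le continuous_const ((continuous_id.sub continuous_const).norm)
    have hdistK : ∀ w ∈ (K : Set H), ε ≤ ‖w - u‖ := by
      intro w hwK
      have hsub : (K : Set H) ⊆ {w : H | ε ≤ ‖w - u‖} := by
        rw [hK, Submodule.topologicalClosure_coe]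
        exact closure_minimal hdist hcl
      exact hsub hwK
    have := hdistK u huK
    simp only [sub_self, norm_zero] at this
    linarith
  · -- exact case
    have hBx : B x ≠ 0 := fun h => hcase (hPhxub B ⟨hBN, h⟩)
    have hBx0 : ((‖B x‖ : ℂ))^2 ≠ 0 := by
      apply pow_ne_zero
      simpa using norm_ne_zero_iff.mpr hBx
    set S : H →L[ℂ] H := rankOne (((‖B x‖ : ℂ)^2)⁻¹ • u) (B x) with hS
    have hSmem : S ∈ nestAlg N := by
      apply rankOne_mem_nestAlg hN
      intro P hP
      by_cases hPD : P ∈ D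
      · right
        have := congrArg (fun T : H →L[ℂ] H => T x) (hBlb P hPD).2
        simpa [ContinuousLinearMap.mul_apply] using this
      · left
        have hPPhx : opLe P Phx := by
          by_contra hh
          exact hPD ⟨hP, hh⟩
        rw [map_smul, hPu P hP hPPhx, smul_zero]
    refine ⟨S, hSmem, ?_⟩
    rw [hS, adjoint_rankOne, rankOne_apply, inner_proj_self (hN.proj B hBN).1 (hN.proj B hBN).2,
      smul_smul, mul_inv_cancel₀ hBx0, one_smul]
    simpa using hε

lemma rankOne_mem_V [CompleteSpace H] {N : Set (H →L[ℂ] H)} (hN : IsNest N)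
    {V : Submodule ℂ (H →L[ℂ] H)} (hVc : WClosed (V : Set (H →L[ℂ] H)))
    (hVl : ∀ T ∈ nestAlg N, ∀ A ∈ V, T * A ∈ V)
    (hVr : ∀ T ∈ nestAlg N, ∀ A ∈ V, A * T ∈ V)
    {x y : H} {Py Phx : H →L[ℂ] H}
    (hPy : IsNestInf N {Q | Q ∈ N ∧ Q y = y} Py) (hPyy : Py y = y)
    (hPhx : IsNestSup N {Q | Q ∈ N ∧ Q x = 0} Phx) (hPhxx : Phx x = 0)
    (hxy : rankOne x y ∈ V)
    {u v : H} (hu : Phx u = 0) (hv : Py v = v) : rankOne u v ∈ V := by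
  have h1 : ∀ n : ℕ, ∃ T ∈ nestAlg N, ‖T y - v‖ < 1/(n+1) :=
    fun n => approx_y hN hPy hPyy hv (by positivity)
  choose T hTmem hT using h1
  have h2 : ∀ n : ℕ, ∃ S ∈ nestAlg N, ‖ContinuousLinearMap.adjoint S x - u‖ < 1/(n+1) :=
    fun n => approx_x hN hPhx hPhxx hu (by positivity)
  choose S hSmem hS using h2
  apply mem_of_wot_tendsto hVc (l := (atTop : Filter ℕ))
    (f := fun n : ℕ => T n * rankOne x y * S n)
  · intro n
    exact hVr (S n) (hSmem n) _ (hVl (T n) (hTmem n) _ hxy)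
  · intro a b
    have hform : ∀ n, (T n * rankOne x y * S n : H →L[ℂ] H) =
        rankOne (ContinuousLinearMap.adjoint (S n) x) (T n y) := by
      intro n
      rw [comp_rankOne, rankOne_comp]
    have hTv : Filter.Tendsto (fun n => T n y) atTop (𝓝 v) := by
      rw [tendsto_iff_norm_sub_tendsto_zero]
      apply squeeze_zero (fun n => norm_nonneg _) (fun n => (hT n).le)
      exact tendsto_one_div_add_atTop_nhds_zero_nat
    have hSu : Filter.Tendsto (fun n => ContinuousLinearMap.adjoint (S n) x) atTop (𝓝 u) := by
      rw [tendsto_iff_norm_sub_tendsto_zero]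
      apply squeeze_zero (fun n => norm_nonneg _) (fun n => (hS n).le)
      exact tendsto_one_div_add_atTop_nhds_zero_nat
    have hmain : Filter.Tendsto (fun n => ⟪a, (T n * rankOne x y * S n) b⟫_ℂ) atTop
        (𝓝 (⟪u, b⟫_ℂ * ⟪a, v⟫_ℂ)) := by
      simp only [hform, rankOne_apply, inner_smul_right]
      exact (hSu.inner tendsto_const_nhds).mul (tendsto_const_nhds.inner hTv)
    have hgoal : ⟪a, rankOne u v b⟫_ℂ = ⟪u, b⟫_ℂ * ⟪a, v⟫_ℂ := by
      rw [rankOne_apply, inner_smul_right]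
    rw [hgoal]
    exact hmain

lemma parseval_span [CompleteSpace H] {K : Submodule ℂ H} [FiniteDimensional ℂ K]
    (b : OrthonormalBasis (Fin (Module.finrank ℂ K)) ℂ K) {w : H} (hw : w ∈ K) (c : H) :
    ∑ j, ⟪w, (b j : H)⟫_ℂ * ⟪(b j : H), c⟫_ℂ = ⟪w, c⟫_ℂ := by
  have hrepr : (w : H) = ∑ j, ⟪(b j : H), w⟫_ℂ • (b j : H) := by
    have h1 := b.sum_repr (⟨w, hw⟩ : K)
    have h2 := congrArg (Submodule.subtype K) h1
    simp only [map_sum, map_smul, Submodule.subtype_apply] at h2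
    conv_lhs => rw [← h2]
    refine Finset.sum_congr rfl fun j _ => ?_
    congr 1
    rw [b.repr_apply_apply]
    rfl
  conv_rhs => rw [hrepr]
  rw [sum_inner]
  refine Finset.sum_congr rfl fun j _ => ?_
  rw [inner_smul_left, inner_conj_symm]

end Helpers

open scoped InnerProductSpace
open Filter Topology

/-- For a weakly closed `T(N)`-bimodule `V`, a rank-one operator `x ⊗ y` lies in `V` if
and only if `P_y B(H) P̂_x^⊥ ⊆ V`. -/
theorem rank_one_mem_bimodule_iff
    {H : Type} [NormedAddCommGroup H] [InnerProductSpace ℂ H] [CompleteSpace H]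
    (N : Set (H →L[ℂ] H)) (hN : IsNest N) (V : Submodule ℂ (H →L[ℂ] H))
    (hVc : WClosed (V : Set (H →L[ℂ] H)))
    (hVl : ∀ T ∈ nestAlg N, ∀ A ∈ V, T * A ∈ V)
    (hVr : ∀ T ∈ nestAlg N, ∀ A ∈ V, A * T ∈ V)
    (x y : H) (Py Phx : H →L[ℂ] H)
    (hPy : IsNestInf N {Q | Q ∈ N ∧ Q y = y} Py) (hPyy : Py y = y)
    (hPhx : IsNestSup N {Q | Q ∈ N ∧ Q x = 0} Phx) (hPhxx : Phx x = 0) :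
    rankOne x y ∈ V ↔ ∀ A : H →L[ℂ] H, Py * A * (1 - Phx) ∈ V := by
  classical
  have hPysa := (hN.proj Py hPy.1).1
  have hPyid := (hN.proj Py hPy.1).2
  have hPhxsa := (hN.proj Phx hPhx.1).1
  have hPhxid := (hN.proj Phx hPhx.1).2
  have hRsa : IsSelfAdjoint ((1 : H →L[ℂ] H) - Phx) :=
    (IsSelfAdjoint.one (R := H →L[ℂ] H)).sub hPhxsa
  constructor
  · intro hxyV A
    have hkey : ∀ s : Finset (H × H), ∃ Bs : H →L[ℂ] H, Bs ∈ V ∧ ∀ p ∈ s,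
        ⟪p.1, Bs p.2⟫_ℂ = ⟪p.1, (Py * A * (1 - Phx)) p.2⟫_ℂ := by
      intro s
      set Kk : Submodule ℂ H := Submodule.span ℂ ((s.image fun p => Py p.1) : Set H) with hKk
      haveI : FiniteDimensional ℂ Kk :=
        FiniteDimensional.span_of_finite ℂ (Finset.finite_toSet _)
      set b := stdOrthonormalBasis ℂ Kk with hb
      refine ⟨∑ j, rankOne ((1 - Phx) (ContinuousLinearMap.adjoint A (b j))) (Py (b j)),
        ?_, ?_⟩
      · apply Submodule.sum_mem
        intro j _
        apply rankOne_mem_V hN hVc hVl hVr hPy hPyy hPhx hPhxx hxyV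
        · simp only [ContinuousLinearMap.sub_apply, ContinuousLinearMap.one_apply, map_sub,
            idem_apply hPhxid]
          abel
        · exact idem_apply hPyid _
      · intro p hp
        have hw : Py p.1 ∈ Kk :=
          Submodule.subset_span (Finset.mem_coe.mpr (Finset.mem_image_of_mem _ hp))
        rw [ContinuousLinearMap.sum_apply, inner_sum]
        have hterm : ∀ j, ⟪p.1, (rankOne ((1 - Phx) (ContinuousLinearMap.adjoint A (b j)))
            (Py (b j))) p.2⟫_ℂ
            = ⟪Py p.1, (b j : H)⟫_ℂ * ⟪(b j : H), A ((1 - Phx) p.2)⟫_ℂ := by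
          intro j
          rw [rankOne_apply, inner_smul_right, sa_inner hRsa,
            ContinuousLinearMap.adjoint_inner_left, ← sa_inner hPysa]
          ring
        rw [Finset.sum_congr rfl (fun j _ => hterm j)]
        rw [parseval_span b hw (A ((1 - Phx) p.2))]
        rw [ContinuousLinearMap.mul_apply, ContinuousLinearMap.mul_apply, sa_inner hPysa]
    choose Bs hBsV hBs using hkey
    haveI : ((atTop : Filter (Finset (H × H)))).NeBot := Filter.atTop_neBot
    apply mem_of_wot_tendsto hVc (l := (atTop : Filter (Finset (H × H)))) (f := Bs) hBsV
    intro a b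
    apply Filter.Tendsto.congr' _ tendsto_const_nhds
    filter_upwards [Filter.eventually_ge_atTop ({(a, b)} : Finset (H × H))] with s hs
    exact (hBs s (a, b) (hs (Finset.mem_singleton_self _))).symm
  · intro h
    have hA := h (rankOne x y)
    have heq : Py * rankOne x y * (1 - Phx) = rankOne x y := by
      ext z
      simp only [ContinuousLinearMap.mul_apply, rankOne_apply, map_smul]
      rw [hPyy]
      congr 1
      rw [← sa_inner hRsa]
      congr 1
      simp only [ContinuousLinearMap.sub_apply, ContinuousLinearMap.one_apply, hPhxx, sub_zero]
    rwa [heq] at hA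
end

section
/- Let N be a complete nest and L a weakly closed Lie T(N)-module. Define K(L) = K_V(L) + K_L(L) + K_D(L) + K_Δ(L) as the sum of the weak closures of the spans of {P T P^⊥}, {P^⊥ T P}, {P S P^⊥ T P}, {P^⊥ T P S P^⊥} respectively, over P ∈ N, T ∈ L, S ∈ T(N). Then [K(L), T(N)] ⊆ L. -/
section Alg
variable {H : Type} [NormedAddCommGroup H] [InnerProductSpace ℂ H] [CompleteSpace H]
variable {N : Set (H →L[ℂ] H)}

lemma proj_mem_nestAlg (hN : IsNest N) {P : H →L[ℂ] H} (hP : P ∈ N) : P ∈ nestAlg N := by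
  intro Q hQ
  rcases hN.total P hP Q hQ with ⟨hPQ, hQP⟩ | ⟨hQP, hPQ⟩
  · rw [sub_mul, one_mul, hQP, sub_self, zero_mul]
  · rw [mul_assoc, hPQ, sub_mul, one_mul, (hN.proj Q hQ).2.eq, sub_self]

lemma corner_mem_nestAlg (hN : IsNest N) {P : H →L[ℂ] H} (hP : P ∈ N) (X : H →L[ℂ] H) :
    P * X * (1 - P) ∈ nestAlg N := by
  intro Q hQ
  rcases hN.total P hP Q hQ with ⟨hPQ, hQP⟩ | ⟨hQP, hPQ⟩
  · have h1 : (1 - Q) * P = 0 := by rw [sub_mul, one_mul, hQP, sub_self]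
    rw [mul_assoc P X, ← mul_assoc (1-Q), h1, zero_mul, zero_mul]
  · have h1 : (1 - P) * Q = 0 := by rw [sub_mul, one_mul, hPQ, sub_self]
    rw [mul_assoc, mul_assoc, h1, mul_zero, mul_zero]

lemma diag_mem_nestAlg (hN : IsNest N) {P : H →L[ℂ] H} (hP : P ∈ N) {U : H →L[ℂ] H}
    (hU : U ∈ nestAlg N) : P * U * P ∈ nestAlg N := by
  intro Q hQ
  rcases hN.total P hP Q hQ with ⟨hPQ, hQP⟩ | ⟨hQP, hPQ⟩
  · have h1 : (1 - Q) * P = 0 := by rw [sub_mul, one_mul, hQP, sub_self]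
    rw [mul_assoc P U, ← mul_assoc (1-Q), h1, zero_mul, zero_mul]
  · have hUQ0 : U * Q = Q * (U * Q) := by
      have h := hU Q hQ
      rw [sub_mul, one_mul, sub_mul] at h
      have h' := sub_eq_zero.mp h
      rw [mul_assoc] at h'
      exact h'
    have h1 : (1 - Q) * P = P - Q := by rw [sub_mul, one_mul, hQP]
    have key : P * (U * Q) = Q * (U * Q) := by
      nth_rw 1 [hUQ0]
      rw [← mul_assoc, hPQ]
    calc (1 - Q) * (P * U * P) * Q = ((1 - Q) * P) * (U * (P * Q)) := by
          simp only [mul_assoc]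
      _ = (P - Q) * (U * Q) := by rw [h1, hPQ]
      _ = P * (U * Q) - Q * (U * Q) := by rw [sub_mul]
      _ = 0 := by rw [key, sub_self]

lemma diag_mem_nestAlg' (hN : IsNest N) {P : H →L[ℂ] H} (hP : P ∈ N) {U : H →L[ℂ] H}
    (hU : U ∈ nestAlg N) : (1 - P) * U * (1 - P) ∈ nestAlg N := by
  intro Q hQ
  rcases hN.total P hP Q hQ with ⟨hPQ, hQP⟩ | ⟨hQP, hPQ⟩
  · have h1 : (1 - Q) * (1 - P) = 1 - Q := by
      rw [mul_sub, mul_one, sub_mul, one_mul, hQP, sub_self, sub_zero]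
    have h2 : (1 - P) * Q = Q - P := by rw [sub_mul, one_mul, hPQ]
    have hQ0 : (1 - Q) * (U * Q) = 0 := by rw [← mul_assoc]; exact hU Q hQ
    have hP0 : (1 - Q) * (U * P) = 0 := by
      have hqp : P = Q * P := hQP.symm
      rw [hqp, ← mul_assoc U Q P, ← mul_assoc, ← mul_assoc, hU Q hQ, zero_mul]
    calc (1 - Q) * ((1 - P) * U * (1 - P)) * Q
        = ((1 - Q) * (1 - P)) * (U * ((1 - P) * Q)) := by simp only [mul_assoc]
      _ = (1 - Q) * (U * (Q - P)) := by rw [h1, h2]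
      _ = (1 - Q) * (U * Q) - (1 - Q) * (U * P) := by rw [mul_sub, mul_sub]
      _ = 0 := by rw [hQ0, hP0, sub_self]
  · have h1 : (1 - P) * Q = 0 := by rw [sub_mul, one_mul, hPQ, sub_self]
    calc (1 - Q) * ((1 - P) * U * (1 - P)) * Q
        = ((1 - Q) * (1 - P)) * (U * ((1 - P) * Q)) := by simp only [mul_assoc]
      _ = 0 := by rw [h1, mul_zero, mul_zero]


variable {L : Submodule ℂ (H →L[ℂ] H)}

lemma lower_corner_mem_L (hN : IsNest N)
    (hLie : ∀ T ∈ L, ∀ S ∈ nestAlg N, T * S - S * T ∈ L)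
    {P T : H →L[ℂ] H} (hP : P ∈ N) (hT : T ∈ L) : (1 - P) * T * P ∈ L := by
  have hPP : P * P = P := (hN.proj P hP).2
  have hPalg := proj_mem_nestAlg hN hP
  have hC : T * P - P * T ∈ L := hLie T hT P hPalg
  have hD : (T * P - P * T) * P - P * (T * P - P * T) ∈ L := hLie _ hC P hPalg
  have hPP2 : ∀ X : H →L[ℂ] H, P * (P * X) = P * X := fun X => by rw [← mul_assoc, hPP]
  have key : (T * P - P * T) * P - P * (T * P - P * T) + (T * P - P * T)
      = (2 : ℂ) • ((1 - P) * T * P) := by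
    simp only [mul_sub, sub_mul, mul_assoc, hPP, hPP2, one_mul, two_smul, smul_sub]
    abel
  have hmem : (2 : ℂ) • ((1 - P) * T * P) ∈ L := key ▸ L.add_mem hD hC
  have h2 := L.smul_mem ((2 : ℂ)⁻¹) hmem
  rw [smul_smul, show ((2:ℂ)⁻¹ * 2) = 1 by norm_num, one_smul] at h2
  exact h2

lemma upper_corner_mem_L (hN : IsNest N)
    (hLie : ∀ T ∈ L, ∀ S ∈ nestAlg N, T * S - S * T ∈ L)
    {P T : H →L[ℂ] H} (hP : P ∈ N) (hT : T ∈ L) : P * T * (1 - P) ∈ L := by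
  have hPP : P * P = P := (hN.proj P hP).2
  have hPalg := proj_mem_nestAlg hN hP
  have hC : T * P - P * T ∈ L := hLie T hT P hPalg
  have hD : (T * P - P * T) * P - P * (T * P - P * T) ∈ L := hLie _ hC P hPalg
  have hPP2 : ∀ X : H →L[ℂ] H, P * (P * X) = P * X := fun X => by rw [← mul_assoc, hPP]
  have key : (T * P - P * T) * P - P * (T * P - P * T) - (T * P - P * T)
      = (2 : ℂ) • (P * T * (1 - P)) := by
    simp only [mul_sub, sub_mul, mul_assoc, hPP, hPP2, one_mul, mul_one, two_smul, smul_sub]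
    abel
  have hmem : (2 : ℂ) • (P * T * (1 - P)) ∈ L := key ▸ L.sub_mem hD hC
  have h2 := L.smul_mem ((2 : ℂ)⁻¹) hmem
  rw [smul_smul, show ((2:ℂ)⁻¹ * 2) = 1 by norm_num, one_smul] at h2
  exact h2

lemma theta_mem (hN : IsNest N)
    (hLie : ∀ T ∈ L, ∀ S ∈ nestAlg N, T * S - S * T ∈ L)
    {P b : H →L[ℂ] H} (hP : P ∈ N) (hb : b ∈ L) (X X' : H →L[ℂ] H) :
    (P * X * (1 - P)) * b * (P * X' * (1 - P)) + (P * X' * (1 - P)) * b * (P * X * (1 - P)) ∈ L := by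
  have hPP : P * P = P := (hN.proj P hP).2
  have hp0 : (1 - P) * P = 0 := by rw [sub_mul, one_mul, hPP, sub_self]
  have hp0' : ∀ Z : H →L[ℂ] H, (1 - P) * (P * Z) = 0 := fun Z => by
    rw [← mul_assoc, hp0, zero_mul]
  set A := P * X * (1 - P) with hA
  set A' := P * X' * (1 - P) with hA'
  have hAalg : A ∈ nestAlg N := corner_mem_nestAlg hN hP X
  have hA'alg : A' ∈ nestAlg N := corner_mem_nestAlg hN hP X'
  have hAA' : A * A' = 0 := by
    rw [hA, hA']; simp only [mul_assoc, hp0', mul_zero]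
  have hA'A : A' * A = 0 := by
    rw [hA, hA']; simp only [mul_assoc, hp0', mul_zero]
  have hAA'2 : ∀ Z : H →L[ℂ] H, A * (A' * Z) = 0 := fun Z => by rw [← mul_assoc, hAA', zero_mul]
  have hA'A2 : ∀ Z : H →L[ℂ] H, A' * (A * Z) = 0 := fun Z => by rw [← mul_assoc, hA'A, zero_mul]
  have h1 : b * A - A * b ∈ L := hLie b hb A hAalg
  have h2 : (b * A - A * b) * A' - A' * (b * A - A * b) ∈ L := hLie _ h1 A' hA'alg
  have key : A * b * A' + A' * b * A = -((b * A - A * b) * A' - A' * (b * A - A * b)) := by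
    simp only [sub_mul, mul_sub, mul_assoc, hAA', hA'A, hAA'2, hA'A2, mul_zero, zero_mul]
    abel
  rw [key]
  exact L.neg_mem h2


lemma diag_comm_mem_L (hN : IsNest N)
    (hLie : ∀ T ∈ L, ∀ S ∈ nestAlg N, T * S - S * T ∈ L)
    {P T S U : H →L[ℂ] H} (hP : P ∈ N) (hT : T ∈ L) (hU : U ∈ nestAlg N) :
    (P * S * (1 - P) * T * P) * (P * U * P) - (P * U * P) * (P * S * (1 - P) * T * P) ∈ L := by
  have hPP : P * P = P := (hN.proj P hP).2
  have hp0 : P * (1 - P) = 0 := by rw [mul_sub, mul_one, hPP, sub_self]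
  have hp0' : ∀ Z : H →L[ℂ] H, P * ((1 - P) * Z) = 0 := fun Z => by
    rw [← mul_assoc, hp0, zero_mul]
  have hq0 : (1 - P) * P = 0 := by rw [sub_mul, one_mul, hPP, sub_self]
  have hq0' : ∀ Z : H →L[ℂ] H, (1 - P) * (P * Z) = 0 := fun Z => by
    rw [← mul_assoc, hq0, zero_mul]
  have hqq : (1 - P) * (1 - P) = 1 - P := by
    rw [mul_sub, mul_one, sub_mul, one_mul, hPP, sub_self, sub_zero]
  have hb : (1 - P) * T * P ∈ L := lower_corner_mem_L hN hLie hP hT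
  set b : H →L[ℂ] H := (1 - P) * T * P with hbdef
  set A : H →L[ℂ] H := P * S * (1 - P) with hAdef
  set u : H →L[ℂ] H := P * U * P with hudef
  have hAalg : A ∈ nestAlg N := corner_mem_nestAlg hN hP S
  have hualg : u ∈ nestAlg N := diag_mem_nestAlg hN hP hU
  have h1 : b * A - A * b ∈ L := hLie b hb A hAalg
  have h2 : (b * A - A * b) * u - u * (b * A - A * b) ∈ L := hLie _ h1 u hualg
  -- X = P*S*(1-P)*T*P = A * b
  have hX : P * S * (1 - P) * T * P = A * b := by
    rw [hAdef, hbdef]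
    simp only [mul_assoc]
    rw [show (1-P) * ((1-P) * (T * P)) = (1-P) * (T * P) by rw [← mul_assoc, hqq]]
  have hbAu : (b * A) * u = 0 := by
    rw [hbdef, hAdef, hudef]
    simp only [mul_assoc]
    simp only [hq0', mul_zero]
  have hubA : u * (b * A) = 0 := by
    rw [hbdef, hAdef, hudef]
    simp only [mul_assoc]
    simp only [hp0', mul_zero]
  have key : (A * b) * u - u * (A * b) = -((b * A - A * b) * u - u * (b * A - A * b)) := by
    simp only [sub_mul, mul_sub, hbAu, hubA]
    abel
  rw [hX, key]
  exact L.neg_mem h2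

lemma diag_comm_mem_L' (hN : IsNest N)
    (hLie : ∀ T ∈ L, ∀ S ∈ nestAlg N, T * S - S * T ∈ L)
    {P T S U : H →L[ℂ] H} (hP : P ∈ N) (hT : T ∈ L) (hU : U ∈ nestAlg N) :
    ((1 - P) * T * P * S * (1 - P)) * ((1 - P) * U * (1 - P))
      - ((1 - P) * U * (1 - P)) * ((1 - P) * T * P * S * (1 - P)) ∈ L := by
  have hPP : P * P = P := (hN.proj P hP).2
  have hp0 : P * (1 - P) = 0 := by rw [mul_sub, mul_one, hPP, sub_self]
  have hp0' : ∀ Z : H →L[ℂ] H, P * ((1 - P) * Z) = 0 := fun Z => by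
    rw [← mul_assoc, hp0, zero_mul]
  have hq0 : (1 - P) * P = 0 := by rw [sub_mul, one_mul, hPP, sub_self]
  have hq0' : ∀ Z : H →L[ℂ] H, (1 - P) * (P * Z) = 0 := fun Z => by
    rw [← mul_assoc, hq0, zero_mul]
  have hb : (1 - P) * T * P ∈ L := lower_corner_mem_L hN hLie hP hT
  set b : H →L[ℂ] H := (1 - P) * T * P with hbdef
  set A : H →L[ℂ] H := P * S * (1 - P) with hAdef
  set w : H →L[ℂ] H := (1 - P) * U * (1 - P) with hwdef
  have hAalg : A ∈ nestAlg N := corner_mem_nestAlg hN hP S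
  have hwalg : w ∈ nestAlg N := diag_mem_nestAlg' hN hP hU
  have h1 : b * A - A * b ∈ L := hLie b hb A hAalg
  have h2 : (b * A - A * b) * w - w * (b * A - A * b) ∈ L := hLie _ h1 w hwalg
  -- X' = (1-P)*T*P*S*(1-P) = b * A
  have hX : (1 - P) * T * P * S * (1 - P) = b * A := by
    rw [hAdef, hbdef]
    simp only [mul_assoc]
    rw [show P * (P * (S * (1-P))) = P * (S * (1-P)) by rw [← mul_assoc, hPP]]
  have hAbw : (A * b) * w = 0 := by
    rw [hbdef, hAdef, hwdef]
    simp only [mul_assoc]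
    simp only [hp0', mul_zero]
  have hwAb : w * (A * b) = 0 := by
    rw [hbdef, hAdef, hwdef]
    simp only [mul_assoc]
    simp only [hq0', mul_zero]
  have key : (b * A) * w - w * (b * A) = (b * A - A * b) * w - w * (b * A - A * b) := by
    simp only [sub_mul, mul_sub, hAbw, hwAb]
    abel
  rw [hX, key]
  exact h2


local notation "⟪" x ", " y "⟫" => @inner ℂ _ _ x y

lemma rankOne_apply_s18 (x y z : H) : rankOne x y z = ⟪x, z⟫ • y := rfl

lemma mul_rankOne_mul (f d g e : H) (b : H →L[ℂ] H) :
    (rankOne f d) * b * (rankOne g e) = ⟪f, b e⟫ • rankOne g d := by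
  ext h
  simp only [ContinuousLinearMap.mul_apply, rankOne_apply_s18, map_smul,
    ContinuousLinearMap.smul_apply, inner_smul_right, smul_smul]
  rw [mul_comm]

lemma rankOne_corner {P : H →L[ℂ] H} (hsa : IsSelfAdjoint P) {g d : H}
    (hg : (1 - P) g = g) (hd : P d = d) :
    P * (rankOne g d) * (1 - P) = rankOne g d := by
  have hsa1 : IsSelfAdjoint (1 - P) := (IsSelfAdjoint.one (H →L[ℂ] H)).sub hsa
  have hadj : ContinuousLinearMap.adjoint (1 - P) = 1 - P := by
    rw [← ContinuousLinearMap.star_eq_adjoint]; exact hsa1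
  ext h
  rw [ContinuousLinearMap.mul_apply, ContinuousLinearMap.mul_apply, rankOne_apply_s18,
    rankOne_apply_s18, map_smul, hd]
  congr 1
  rw [← hadj, ContinuousLinearMap.adjoint_inner_right, hg]


lemma upper_full_mem (hN : IsNest N) (hLc : WClosed (L : Set (H →L[ℂ] H)))
    (hLie : ∀ T ∈ L, ∀ S ∈ nestAlg N, T * S - S * T ∈ L)
    {P T : H →L[ℂ] H} (hP : P ∈ N) (hT : T ∈ L) (hb : (1 - P) * T * P ≠ 0)
    (Z : H →L[ℂ] H) : P * Z * (1 - P) ∈ L := by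
  have hPP : P * P = P := (hN.proj P hP).2
  have hsa : IsSelfAdjoint P := (hN.proj P hP).1
  have hqq : (1 - P) * (1 - P) = 1 - P := by
    rw [mul_sub, mul_one, sub_mul, one_mul, hPP, sub_self, sub_zero]
  set b : H →L[ℂ] H := (1 - P) * T * P with hbdef
  have hbL : b ∈ L := lower_corner_mem_L hN hLie hP hT
  obtain ⟨x, hx⟩ : ∃ x, b x ≠ 0 := by
    by_contra hcon
    push_neg at hcon
    exact hb (by ext y; simp [hcon])
  have hPapp : ∀ v : H, P (P v) = P v := fun v => by
    have := congrArg (fun (M : H →L[ℂ] H) => M v) hPP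
    simpa [ContinuousLinearMap.mul_apply] using this
  have hQapp : ∀ v : H, (1 - P) ((1 - P) v) = (1 - P) v := fun v => by
    have := congrArg (fun (M : H →L[ℂ] H) => M v) hqq
    simpa [ContinuousLinearMap.mul_apply] using this
  have hbP : b * P = b := by rw [hbdef, mul_assoc, hPP]
  have hQb : (1 - P) * b = b := by rw [hbdef, ← mul_assoc, ← mul_assoc, hqq]
  have hinner : ∀ g h : H, (1 - P) g = g → ⟪g, (1 - P) h⟫ = ⟪g, h⟫ := by
    intro g h hg
    have hadj : ContinuousLinearMap.adjoint (1 - P) = 1 - P := by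
      rw [← ContinuousLinearMap.star_eq_adjoint]
      exact (IsSelfAdjoint.one (H →L[ℂ] H)).sub hsa
    rw [← hadj, ContinuousLinearMap.adjoint_inner_right, hg]
  set e₀ : H := P x with he₀
  set f₀ : H := b x with hf₀
  have hPe₀ : P e₀ = e₀ := hPapp x
  have hQf₀ : (1 - P) f₀ = f₀ := by
    rw [hf₀, ← ContinuousLinearMap.mul_apply, hQb]
  have hbe₀ : b e₀ = f₀ := by
    rw [he₀, ← ContinuousLinearMap.mul_apply, hbP, hf₀]
  have hc0 : ⟪f₀, b e₀⟫ ≠ 0 := by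
    rw [hbe₀]
    exact inner_self_ne_zero.mpr (by rw [hf₀]; exact hx)
  have theta' : ∀ g d g' d' : H, (1 - P) g = g → P d = d → (1 - P) g' = g' → P d' = d' →
      (rankOne g d) * b * (rankOne g' d') + (rankOne g' d') * b * (rankOne g d) ∈ L := by
    intro g d g' d' hg hd hg' hd'
    have h := theta_mem hN hLie hP hbL (rankOne g d) (rankOne g' d')
    rwa [rankOne_corner hsa hg hd, rankOne_corner hsa hg' hd'] at h
  have step1 : rankOne f₀ e₀ ∈ L := by
    have h := theta' f₀ e₀ f₀ e₀ hQf₀ hPe₀ hQf₀ hPe₀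
    rw [mul_rankOne_mul, ← add_smul] at h
    have h2c : ⟪f₀, b e₀⟫ + ⟪f₀, b e₀⟫ ≠ 0 := by
      intro h0
      apply hc0
      have h1 : (2 : ℂ) * ⟪f₀, b e₀⟫ = 0 := by rw [two_mul]; exact h0
      exact (mul_eq_zero.mp h1).resolve_left two_ne_zero
    have h2 := L.smul_mem (⟪f₀, b e₀⟫ + ⟪f₀, b e₀⟫)⁻¹ h
    rwa [smul_smul, inv_mul_cancel₀ h2c, one_smul] at h2
  have step2 : ∀ g d : H, (1 - P) g = g → P d = d → rankOne g d ∈ L := by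
    intro g d hg hd
    have h := theta' f₀ d g e₀ hQf₀ hd hg hPe₀
    rw [mul_rankOne_mul, mul_rankOne_mul] at h
    have h2 : (⟪f₀, b e₀⟫ : ℂ) • rankOne g d ∈ L := by
      have h3 := L.sub_mem h (L.smul_mem ⟪g, b d⟫ step1)
      simpa using h3
    have h4 := L.smul_mem (⟪f₀, b e₀⟫)⁻¹ h2
    rwa [smul_smul, inv_mul_cancel₀ hc0, one_smul] at h4
  -- density argument
  set G : H →L[ℂ] H := P * Z * (1 - P) with hGdef
  have hPG : P * G = G := by rw [hGdef, ← mul_assoc, ← mul_assoc, hPP]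
  have hGQ : G * (1 - P) = G := by rw [hGdef, mul_assoc, hqq]
  have hPGapp : ∀ v, P (G v) = G v := fun v => by
    rw [← ContinuousLinearMap.mul_apply, hPG]
  have hGQapp : ∀ v, G ((1 - P) v) = G v := fun v => by
    rw [← ContinuousLinearMap.mul_apply, hGQ]
  let U : Finset H → Submodule ℂ H := fun s =>
    Submodule.span ℂ ((fun v => (1 - P) v) '' (s : Set H))
  have hUfin : ∀ s, FiniteDimensional ℂ (U s) := fun s =>
    FiniteDimensional.span_of_finite ℂ (s.finite_toSet.image _)
  have hUQ : ∀ s, ∀ v ∈ U s, (1 - P) v = v := by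
    intro s v hv
    induction hv using Submodule.span_induction with
    | mem y hy => obtain ⟨w, _, rfl⟩ := hy; exact hQapp w
    | zero => simp
    | add y z _ _ hy hz => rw [map_add, hy, hz]
    | smul a y _ hy => rw [map_smul, hy]
  let F : Finset H → (H →L[ℂ] H) := fun s =>
    haveI := hUfin s
    haveI : CompleteSpace (U s) := FiniteDimensional.complete ℂ (U s)
    (G ∘L ((U s).subtypeL ∘L (U s).orthogonalProjectionOnto)) ∘L (1 - P)
  have hFmemL : ∀ s, F s ∈ L := by
    intro s
    haveI := hUfin s
    haveI : CompleteSpace (U s) := FiniteDimensional.complete ℂ (U s)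
    set bb := stdOrthonormalBasis ℂ (U s) with hbb
    have hF : F s = ∑ i, rankOne ((bb i : H)) (G ((bb i : H))) := by
      ext h
      show G (((U s).subtypeL) ((U s).orthogonalProjectionOnto ((1 - P) h))) = _
      rw [bb.orthogonalProjectionOnto_apply_eq_sum ((1 - P) h)]
      rw [map_sum, map_sum, ContinuousLinearMap.sum_apply]
      refine Finset.sum_congr rfl (fun i _ => ?_)
      rw [rankOne_apply_s18, Submodule.subtypeL_apply, SetLike.val_smul, map_smul]
      congr 1
      rw [hinner _ _ (hUQ s _ (bb i).2)]
    rw [hF]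
    exact L.sum_mem (fun i _ => step2 _ _ (hUQ s _ (bb i).2) (hPGapp _))
  have htends : Filter.Tendsto (fun s => (ContinuousLinearMapWOT.ofCLM : (H →L[ℂ] H) → (H →WOT[ℂ] H)) (F s)) Filter.atTop
      (nhds ((ContinuousLinearMapWOT.ofCLM : (H →L[ℂ] H) → (H →WOT[ℂ] H)) G)) := by
    rw [ContinuousLinearMapWOT.tendsto_iff_forall_dual_apply_tendsto]
    intro v y
    have hev : (fun s => y (((ContinuousLinearMapWOT.ofCLM : (H →L[ℂ] H) → (H →WOT[ℂ] H)) (F s)) v))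
        =ᶠ[Filter.atTop] (fun _ => y (((ContinuousLinearMapWOT.ofCLM : (H →L[ℂ] H) → (H →WOT[ℂ] H)) G) v)) := by
      filter_upwards [Filter.eventually_ge_atTop ({v} : Finset H)] with s hs
      have hvs : v ∈ s := hs (Finset.mem_singleton_self v)
      haveI := hUfin s
      haveI : CompleteSpace (U s) := FiniteDimensional.complete ℂ (U s)
      have hFv : F s v = G v := by
        have hmem : (1 - P) v ∈ U s := Submodule.subset_span ⟨v, hvs, rfl⟩
        show G (((U s).subtypeL) ((U s).orthogonalProjectionOnto ((1 - P) v))) = G v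
        rw [show (U s).orthogonalProjectionOnto ((1 - P) v)
              = (⟨(1 - P) v, hmem⟩ : U s) from
            Submodule.orthogonalProjectionOnto_mem_subspace_eq_self ⟨(1 - P) v, hmem⟩]
        simpa using hGQapp v
      simp only [ContinuousLinearMapWOT.ofCLM_apply, hFv]
    exact tendsto_const_nhds.congr' hev.symm
  have hmemev : ∀ᶠ s in Filter.atTop, (ContinuousLinearMapWOT.ofCLM : (H →L[ℂ] H) → (H →WOT[ℂ] H)) (F s) ∈
      ((ContinuousLinearMapWOT.ofCLM : (H →L[ℂ] H) → (H →WOT[ℂ] H))) '' (L : Set (H →L[ℂ] H)) :=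
    Filter.Eventually.of_forall (fun s => ⟨F s, hFmemL s, rfl⟩)
  have hcl : (ContinuousLinearMapWOT.ofCLM : (H →L[ℂ] H) → (H →WOT[ℂ] H)) G ∈
      closure (((ContinuousLinearMapWOT.ofCLM : (H →L[ℂ] H) → (H →WOT[ℂ] H))) '' (L : Set (H →L[ℂ] H))) :=
    mem_closure_of_tendsto htends hmemev
  have hLc' : IsClosed (((ContinuousLinearMapWOT.ofCLM : (H →L[ℂ] H) → (H →WOT[ℂ] H))) '' (L : Set (H →L[ℂ] H))) := hLc
  rw [hLc'.closure_eq] at hcl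
  obtain ⟨G', hG'L, hG'eq⟩ := hcl
  have hGG : G' = G := ContinuousLinearMapWOT.ofCLM_injective hG'eq
  exact hGG ▸ hG'L


lemma gen_D_comm_mem (hN : IsNest N) (hLc : WClosed (L : Set (H →L[ℂ] H)))
    (hLie : ∀ T ∈ L, ∀ S ∈ nestAlg N, T * S - S * T ∈ L)
    {P T S R : H →L[ℂ] H} (hP : P ∈ N) (hT : T ∈ L) (hS : S ∈ nestAlg N)
    (hR : R ∈ nestAlg N) :
    (P * S * (1 - P) * T * P) * R - R * (P * S * (1 - P) * T * P) ∈ L := by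
  have hPP : P * P = P := (hN.proj P hP).2
  have hPP2 : ∀ Z : H →L[ℂ] H, P * (P * Z) = P * Z := fun Z => by rw [← mul_assoc, hPP]
  by_cases hb : (1 - P) * T * P = 0
  · have hX0 : P * S * (1 - P) * T * P = 0 := by
      calc P * S * (1 - P) * T * P = (P * S) * ((1 - P) * T * P) := by simp only [mul_assoc]
        _ = 0 := by rw [hb, mul_zero]
    rw [hX0]
    simpa using L.zero_mem
  · have hRP : (1 - P) * R * P = 0 := hR P hP
    set X : H →L[ℂ] H := P * S * (1 - P) * T * P with hXdef
    have hXP : X * P = X := by rw [hXdef, mul_assoc (P * S * (1-P) * T) P P, hPP]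
    have hPX : P * X = X := by
      rw [hXdef]
      simp only [← mul_assoc, hPP]
    have hPRP : P * (R * P) = R * P := by
      have h := hRP
      rw [sub_mul, one_mul, sub_mul, mul_assoc] at h
      exact (sub_eq_zero.mp h).symm
    have key : X * R - R * X = (X * (P * R * P) - (P * R * P) * X) + X * (P * R * (1 - P)) := by
      have h1 : P * R * P + P * R * (1 - P) = P * R := by
        rw [← mul_add, add_sub_cancel, mul_one]
      have h2 : X * (P * R * P) + X * (P * R * (1 - P)) = X * R := by
        rw [← mul_add, h1, ← mul_assoc, hXP]
      have h3 : (P * R * P) * X = R * X := by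
        rw [mul_assoc P R P, hPRP, mul_assoc, hPX]
      rw [← h2, ← h3]
      abel
    rw [key]
    refine L.add_mem (diag_comm_mem_L hN hLie hP hT hR) ?_
    have hform : X * (P * R * (1 - P)) = P * (S * ((1 - P) * (T * (P * R)))) * (1 - P) := by
      rw [hXdef]
      simp only [mul_assoc, hPP2]
    rw [hform]
    exact upper_full_mem hN hLc hLie hP hT hb _

lemma gen_Delta_comm_mem (hN : IsNest N) (hLc : WClosed (L : Set (H →L[ℂ] H)))
    (hLie : ∀ T ∈ L, ∀ S ∈ nestAlg N, T * S - S * T ∈ L)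
    {P T S R : H →L[ℂ] H} (hP : P ∈ N) (hT : T ∈ L) (hS : S ∈ nestAlg N)
    (hR : R ∈ nestAlg N) :
    ((1 - P) * T * P * S * (1 - P)) * R - R * ((1 - P) * T * P * S * (1 - P)) ∈ L := by
  have hPP : P * P = P := (hN.proj P hP).2
  have hqq : (1 - P) * (1 - P) = 1 - P := by
    rw [mul_sub, mul_one, sub_mul, one_mul, hPP, sub_self, sub_zero]
  have hQQ2 : ∀ Z : H →L[ℂ] H, (1 - P) * ((1 - P) * Z) = (1 - P) * Z := fun Z => by
    rw [← mul_assoc, hqq]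
  by_cases hb : (1 - P) * T * P = 0
  · have hX0 : (1 - P) * T * P * S * (1 - P) = 0 := by
      calc (1 - P) * T * P * S * (1 - P) = ((1 - P) * T * P) * (S * (1 - P)) := by
            simp only [mul_assoc]
        _ = 0 := by rw [hb, zero_mul]
    rw [hX0]
    simpa using L.zero_mem
  · have hRP : (1 - P) * R * P = 0 := hR P hP
    set X : H →L[ℂ] H := (1 - P) * T * P * S * (1 - P) with hXdef
    have hXQ : X * (1 - P) = X := by
      rw [hXdef, mul_assoc ((1-P) * T * P * S) (1-P) (1-P), hqq]
    have hQX : (1 - P) * X = X := by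
      rw [hXdef]
      simp only [← mul_assoc, hqq]
    have hw : (1 - P) * R = (1 - P) * R * (1 - P) := by
      have h1 : (1 - P) * R * P + (1 - P) * R * (1 - P) = (1 - P) * R := by
        rw [← mul_add, add_sub_cancel, mul_one]
      rw [hRP, zero_add] at h1
      exact h1.symm
    have key : X * R - R * X
        = (X * ((1 - P) * R * (1 - P)) - ((1 - P) * R * (1 - P)) * X)
          - (P * R * (1 - P)) * X := by
      have e1 : X * R = X * ((1 - P) * R * (1 - P)) := by
        rw [← hw, ← mul_assoc, hXQ]
      have e2 : R * X = (P * R * (1 - P)) * X + ((1 - P) * R * (1 - P)) * X := by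
        rw [← add_mul, ← add_mul, ← add_mul, add_sub_cancel, one_mul, mul_assoc, hQX]
      rw [e1, e2]
      abel
    rw [key]
    refine L.sub_mem (diag_comm_mem_L' hN hLie hP hT hR) ?_
    have hform : (P * R * (1 - P)) * X = P * (R * ((1 - P) * (T * (P * S)))) * (1 - P) := by
      rw [hXdef]
      simp only [mul_assoc, hQQ2]
    rw [hform]
    exact upper_full_mem hN hLc hLie hP hT hb _

lemma wClosure_comm_mem (hLc : WClosed (L : Set (H →L[ℂ] H))) {R : H →L[ℂ] H}
    (gen : Set (H →L[ℂ] H)) (hgen : ∀ x ∈ gen, x * R - R * x ∈ L) :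
    ∀ a ∈ wClosure ((Submodule.span ℂ gen : Submodule ℂ (H →L[ℂ] H)) : Set (H →L[ℂ] H)),
      a * R - R * a ∈ L := by
  intro a ha
  set Φ : (H →WOT[ℂ] H) → (H →WOT[ℂ] H) := fun z =>
    (ContinuousLinearMapWOT.ofCLM : (H →L[ℂ] H) → (H →WOT[ℂ] H))
      (((ContinuousLinearMapWOT.toCLM z) * R)
        - (R * (ContinuousLinearMapWOT.toCLM z))) with hΦ
  have hcont : Continuous Φ := by
    apply ContinuousLinearMapWOT.continuous_of_dual_apply_continuous
    intro x y
    have heq : (fun z : H →WOT[ℂ] H => y ((Φ z) x))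
        = fun z : H →WOT[ℂ] H => y (z (R x)) - (y.comp R) (z x) := by
      funext z
      show y (((ContinuousLinearMapWOT.toCLM z) * R
        - R * ((ContinuousLinearMapWOT.toCLM z))) x) = _
      rw [ContinuousLinearMap.sub_apply, map_sub]
      rfl
    rw [heq]
    exact (ContinuousLinearMapWOT.continuous_dual_apply (R x) y).sub
      (ContinuousLinearMapWOT.continuous_dual_apply x (y.comp R))
  have hclosed : IsClosed (Φ ⁻¹' (((ContinuousLinearMapWOT.ofCLM : (H →L[ℂ] H) → (H →WOT[ℂ] H))) '' (L : Set (H →L[ℂ] H)))) :=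
    IsClosed.preimage hcont (hLc : IsClosed _)
  have hsub : ((ContinuousLinearMapWOT.ofCLM : (H →L[ℂ] H) → (H →WOT[ℂ] H))) ''
        ((Submodule.span ℂ gen : Submodule ℂ (H →L[ℂ] H)) : Set (H →L[ℂ] H))
      ⊆ Φ ⁻¹' (((ContinuousLinearMapWOT.ofCLM : (H →L[ℂ] H) → (H →WOT[ℂ] H))) '' (L : Set (H →L[ℂ] H))) := by
    rintro _ ⟨v, hv, rfl⟩
    have hvL : v * R - R * v ∈ L := by
      induction hv using Submodule.span_induction with
      | mem u hu => exact hgen u hu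
      | zero => simpa using L.zero_mem
      | add u w _ _ hu hw =>
          have h := L.add_mem hu hw
          convert h using 1
          noncomm_ring
      | smul cc u _ hu =>
          have h := L.smul_mem cc hu
          convert h using 1
          rw [smul_mul_assoc, mul_smul_comm, smul_sub]
    refine ⟨v * R - R * v, hvL, ?_⟩
    simp only [hΦ, ContinuousLinearMapWOT.toCLM_ofCLM]
  have hsubc := closure_minimal hsub hclosed
  have haΦ : Φ ((ContinuousLinearMapWOT.ofCLM : (H →L[ℂ] H) → (H →WOT[ℂ] H)) a) ∈
      ((ContinuousLinearMapWOT.ofCLM : (H →L[ℂ] H) → (H →WOT[ℂ] H))) '' (L : Set (H →L[ℂ] H)) := hsubc ha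
  rw [show Φ ((ContinuousLinearMapWOT.ofCLM : (H →L[ℂ] H) → (H →WOT[ℂ] H)) a)
      = (ContinuousLinearMapWOT.ofCLM : (H →L[ℂ] H) → (H →WOT[ℂ] H)) (a * R - R * a) by
    simp only [hΦ, ContinuousLinearMapWOT.toCLM_ofCLM]] at haΦ
  obtain ⟨w, hwL, hweq⟩ := haΦ
  exact (ContinuousLinearMapWOT.ofCLM_injective hweq) ▸ hwL

end Alg


/-- With `K(L) = K_V(L) + K_L(L) + K_D(L) + K_Δ(L)` the sum of the weak closures of the
spans of `{PTP^⊥}`, `{P^⊥TP}`, `{PSP^⊥TP}`, `{P^⊥TPSP^⊥}` (over `P ∈ N`, `T ∈ L`,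
`S ∈ T(N)`), one has `[K(L), T(N)] ⊆ L`. -/
theorem commutator_K_subset_L
    {H : Type} [NormedAddCommGroup H] [InnerProductSpace ℂ H] [CompleteSpace H]
    (N : Set (H →L[ℂ] H)) (hN : IsNest N) (L : Submodule ℂ (H →L[ℂ] H))
    (hLc : WClosed (L : Set (H →L[ℂ] H)))
    (hLie : ∀ T ∈ L, ∀ S ∈ nestAlg N, T * S - S * T ∈ L) :
    ∀ a ∈ wClosure (Submodule.span ℂ
        {X : H →L[ℂ] H | ∃ P ∈ N, ∃ T ∈ L, X = P * T * (1 - P)} : Set (H →L[ℂ] H)),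
    ∀ b ∈ wClosure (Submodule.span ℂ
        {X : H →L[ℂ] H | ∃ P ∈ N, ∃ T ∈ L, X = (1 - P) * T * P} : Set (H →L[ℂ] H)),
    ∀ c ∈ wClosure (Submodule.span ℂ
        {X : H →L[ℂ] H | ∃ P ∈ N, ∃ T ∈ L, ∃ S ∈ nestAlg N,
          X = P * S * (1 - P) * T * P} : Set (H →L[ℂ] H)),
    ∀ d ∈ wClosure (Submodule.span ℂ
        {X : H →L[ℂ] H | ∃ P ∈ N, ∃ T ∈ L, ∃ S ∈ nestAlg N,
          X = (1 - P) * T * P * S * (1 - P)} : Set (H →L[ℂ] H)),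
    ∀ R ∈ nestAlg N, (a + b + c + d) * R - R * (a + b + c + d) ∈ L := by
  intro a ha b hb c hc d hd R hR
  have hVa : a * R - R * a ∈ L := by
    refine wClosure_comm_mem hLc _ ?_ a ha
    rintro x ⟨P, hP, T, hT, rfl⟩
    exact hLie _ (upper_corner_mem_L hN hLie hP hT) R hR
  have hLb : b * R - R * b ∈ L := by
    refine wClosure_comm_mem hLc _ ?_ b hb
    rintro x ⟨P, hP, T, hT, rfl⟩
    exact hLie _ (lower_corner_mem_L hN hLie hP hT) R hR
  have hDc : c * R - R * c ∈ L := by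
    refine wClosure_comm_mem hLc _ ?_ c hc
    rintro x ⟨P, hP, T, hT, S, hS, rfl⟩
    exact gen_D_comm_mem hN hLc hLie hP hT hS hR
  have hTd : d * R - R * d ∈ L := by
    refine wClosure_comm_mem hLc _ ?_ d hd
    rintro x ⟨P, hP, T, hT, S, hS, rfl⟩
    exact gen_Delta_comm_mem hN hLc hLie hP hT hS hR
  have key : (a + b + c + d) * R - R * (a + b + c + d)
      = (a * R - R * a) + (b * R - R * b) + (c * R - R * c) + (d * R - R * d) := by
    noncomm_ring
  rw [key]
  exact L.add_mem (L.add_mem (L.add_mem hVa hLb) hDc) hTd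
end
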